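/- In H(n,k,p_n) with λ_n = C(n−1,k−1)p_n = log n + w(n) where w(n) → +∞, the probability that H_n has no isolated vertices (equivalently, no degenerate star-collisions) tends to 1. -/

import Mathlib

/-- All `k`-element subsets of `[n]`, the possible hyperedges of a `k`-uniform
hypergraph on `n` vertices. -/
def kSets (n k : ℕ) : Finset (Finset (Fin n)) :=
  (Finset.univ : Finset (Fin n)).powersetCard k

/-- The probability, in the random hypergraph `H(n,k,p)` where each `k`-subset is a
hyperedge independently with probability `p`, of a given edge set `E`. -/
noncomputable def hweight (n k : ℕ) (p : ℝ) (E : Finset (Finset (Fin n))) : ℝ :=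
  if E ⊆ kSets n k then p ^ E.card * (1 - p) ^ ((kSets n k).card - E.card) else 0

open Classical in
/-- The probability of an event `A` under `H(n,k,p)`. -/
noncomputable def hprob (n k : ℕ) (p : ℝ) (A : Finset (Finset (Fin n)) → Prop) : ℝ :=
  ∑ E : Finset (Finset (Fin n)), if A E then hweight n k p E else 0

/-- The expectation of a random variable `f` under `H(n,k,p)`. -/
noncomputable def hexp (n k : ℕ) (p : ℝ) (f : Finset (Finset (Fin n)) → ℝ) : ℝ :=
  ∑ E : Finset (Finset (Fin n)), hweight n k p E * f E

/-- The star of a vertex `v`: the set of hyperedges of `E` containing `v`. -/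
def hstar {n : ℕ} (E : Finset (Finset (Fin n))) (v : Fin n) : Finset (Finset (Fin n)) :=
  E.filter (fun e => v ∈ e)

/-- `X_r`: the number of unordered pairs of (distinct) vertices with identical stars of
size exactly `r` (star-collisions of support size `r`). -/
def Xr (n r : ℕ) (E : Finset (Finset (Fin n))) : ℕ :=
  ((Finset.univ : Finset (Fin n)).powersetCard 2 |>.filter
    (fun P => (∀ u ∈ P, ∀ v ∈ P, hstar E u = hstar E v) ∧
      ∀ u ∈ P, (hstar E u).card = r)).card

open Filter

lemma binom_sum {α : Type*} [DecidableEq α] (s : Finset α) (p : ℝ) :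
    ∑ t ∈ s.powerset, p ^ t.card * (1 - p) ^ (s.card - t.card) = 1 := by
  have h := Finset.prod_add (fun _ : α => p) (fun _ : α => (1 - p)) s
  simp only [Finset.prod_const] at h
  have h2 : ∀ t ∈ s.powerset, p ^ t.card * (1 - p) ^ (s \ t).card
      = p ^ t.card * (1 - p) ^ (s.card - t.card) := by
    intro t ht
    rw [Finset.card_sdiff_of_subset (Finset.mem_powerset.mp ht)]
  rw [Finset.sum_congr rfl h2] at h
  have h3 : p + (1 - p) = 1 := by ring
  rw [h3, one_pow] at h
  exact h.symm

lemma powerset_sum {α : Type*} [DecidableEq α] (S A : Finset α) (hA : A ⊆ S) (p : ℝ) :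
    ∑ E ∈ A.powerset, p ^ E.card * (1 - p) ^ (S.card - E.card)
      = (1 - p) ^ (S.card - A.card) := by
  have h2 : A.card ≤ S.card := Finset.card_le_card hA
  have key : ∀ E ∈ A.powerset, p ^ E.card * (1 - p) ^ (S.card - E.card)
      = (1 - p) ^ (S.card - A.card) * (p ^ E.card * (1 - p) ^ (A.card - E.card)) := by
    intro E hE
    have h1 : E.card ≤ A.card := Finset.card_le_card (Finset.mem_powerset.mp hE)
    have h3 : S.card - E.card = (S.card - A.card) + (A.card - E.card) := by omega
    rw [h3, pow_add]; ring
  rw [Finset.sum_congr rfl key, ← Finset.mul_sum, binom_sum, mul_one]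

lemma hweight_sum (n k : ℕ) (p : ℝ) :
    ∑ E : Finset (Finset (Fin n)), hweight n k p E = 1 := by
  classical
  have h : ∑ E ∈ (kSets n k).powerset, hweight n k p E
      = ∑ E : Finset (Finset (Fin n)), hweight n k p E := by
    apply Finset.sum_subset (Finset.subset_univ _)
    intro E _ hE
    rw [Finset.mem_powerset] at hE
    rw [hweight, if_neg hE]
  rw [← h]
  have h2 : ∀ E ∈ (kSets n k).powerset, hweight n k p E
      = p ^ E.card * (1 - p) ^ ((kSets n k).card - E.card) := by
    intro E hE
    rw [hweight, if_pos (Finset.mem_powerset.mp hE)]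
  rw [Finset.sum_congr rfl h2]
  have := powerset_sum (kSets n k) (kSets n k) (le_refl _) p
  simpa using this

lemma hweight_nonneg (n k : ℕ) (p : ℝ) (hp0 : 0 ≤ p) (hp1 : p ≤ 1)
    (E : Finset (Finset (Fin n))) : 0 ≤ hweight n k p E := by
  rw [hweight]
  split
  · exact mul_nonneg (pow_nonneg hp0 _) (pow_nonneg (by linarith) _)
  · exact le_refl 0

open Classical in
lemma hprob_not (n k : ℕ) (p : ℝ) (A : Finset (Finset (Fin n)) → Prop) :
    hprob n k p (fun E => ¬ A E) = 1 - hprob n k p A := by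
  rw [eq_sub_iff_add_eq, hprob, hprob, ← Finset.sum_add_distrib, ← hweight_sum n k p]
  apply Finset.sum_congr rfl
  intro E _
  by_cases h : A E <;> simp [h]

open Classical in
lemma hprob_le_one (n k : ℕ) (p : ℝ) (hp0 : 0 ≤ p) (hp1 : p ≤ 1)
    (A : Finset (Finset (Fin n)) → Prop) : hprob n k p A ≤ 1 := by
  rw [hprob, ← hweight_sum n k p]
  apply Finset.sum_le_sum
  intro E _
  split
  · exact le_refl _
  · exact hweight_nonneg n k p hp0 hp1 E

open Classical in
lemma hprob_union_bound (n k : ℕ) (p : ℝ) (hp0 : 0 ≤ p) (hp1 : p ≤ 1)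
    (B : Fin n → Finset (Finset (Fin n)) → Prop) :
    hprob n k p (fun E => ∃ v, B v E) ≤ ∑ v : Fin n, hprob n k p (B v) := by
  rw [hprob]
  simp only [hprob]
  rw [Finset.sum_comm]
  apply Finset.sum_le_sum
  intro E _
  by_cases h : ∃ v, B v E
  · obtain ⟨v0, hv0⟩ := h
    rw [if_pos ⟨v0, hv0⟩]
    have hsingle := Finset.single_le_sum
      (f := fun v => if B v E then hweight n k p E else 0)
      (fun v _ => by
        split
        · exact hweight_nonneg n k p hp0 hp1 E
        · exact le_refl 0)
      (Finset.mem_univ v0)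
    rw [if_pos hv0] at hsingle
    exact hsingle
  · rw [if_neg h]
    apply Finset.sum_nonneg
    intro v _
    split
    · exact hweight_nonneg n k p hp0 hp1 E
    · exact le_refl 0

lemma card_filter_mem (n k : ℕ) (hk : 1 ≤ k) (v : Fin n) :
    ((kSets n k).filter (fun e => v ∈ e)).card = (n - 1).choose (k - 1) := by
  classical
  have key : ((kSets n k).filter (fun e => v ∈ e)).card
      = (((Finset.univ : Finset (Fin n)).erase v).powersetCard (k - 1)).card := by
    apply Finset.card_nbij' (i := fun e => e.erase v) (j := fun s => insert v s)
    · intro e he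
      simp only [Finset.mem_coe, kSets, Finset.mem_filter, Finset.mem_powersetCard] at he
      obtain ⟨⟨_, hcard⟩, hv⟩ := he
      rw [Finset.mem_coe, Finset.mem_powersetCard]
      constructor
      · exact Finset.erase_subset_erase v (Finset.subset_univ e)
      · rw [Finset.card_erase_of_mem hv, hcard]
    · intro s hs
      rw [Finset.mem_coe, Finset.mem_powersetCard] at hs
      obtain ⟨hsub, hcard⟩ := hs
      have hvs : v ∉ s := fun h => (Finset.ne_of_mem_erase (hsub h)) rfl
      simp only [Finset.mem_coe, kSets, Finset.mem_filter, Finset.mem_powersetCard]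
      refine ⟨⟨Finset.subset_univ _, ?_⟩, Finset.mem_insert_self v s⟩
      rw [Finset.card_insert_of_notMem hvs, hcard]
      omega
    · intro e he
      simp only [Finset.mem_coe, Finset.mem_filter] at he
      exact Finset.insert_erase he.2
    · intro s hs
      rw [Finset.mem_coe, Finset.mem_powersetCard] at hs
      have hvs : v ∉ s := fun h => (Finset.ne_of_mem_erase (hs.1 h)) rfl
      exact Finset.erase_insert hvs
  rw [key, Finset.card_powersetCard, Finset.card_erase_of_mem (Finset.mem_univ v),
    Finset.card_univ, Fintype.card_fin]

open Classical in
lemma hprob_isolated (n k : ℕ) (hk : 1 ≤ k) (p : ℝ) (v : Fin n) :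
    hprob n k p (fun E => hstar E v = ∅) = (1 - p) ^ ((n - 1).choose (k - 1)) := by
  set S := kSets n k with hS
  set T := S.filter (fun e => v ∈ e) with hT
  have hTS : T ⊆ S := Finset.filter_subset _ _
  have hTcard : T.card ≤ S.card := Finset.card_le_card hTS
  have key : ∀ E : Finset (Finset (Fin n)),
      (@ite ℝ (hstar E v = ∅) (Classical.propDecidable _) (hweight n k p E) 0)
      = if E ∈ (S \ T).powerset then p ^ E.card * (1 - p) ^ (S.card - E.card) else 0 := by
    intro E
    have hmem : E ∈ (S \ T).powerset ↔ (E ⊆ S ∧ hstar E v = ∅) := by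
      rw [Finset.mem_powerset, hstar, Finset.filter_eq_empty_iff]
      constructor
      · intro h
        constructor
        · exact h.trans (Finset.sdiff_subset)
        · intro e heE
          have := h heE
          rw [Finset.mem_sdiff, hT, Finset.mem_filter] at this
          exact fun hv => this.2 ⟨this.1, hv⟩
      · rintro ⟨hES, hemp⟩ e heE
        rw [Finset.mem_sdiff, hT, Finset.mem_filter]
        exact ⟨hES heE, fun hmem => hemp heE hmem.2⟩
    by_cases hc : hstar E v = ∅
    · rw [if_pos hc, hweight]
      by_cases hES : E ⊆ S
      · rw [if_pos hES, if_pos (hmem.mpr ⟨hES, hc⟩)]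
      · rw [if_neg hES, if_neg (fun h => hES (hmem.mp h).1)]
    · rw [if_neg hc, if_neg (fun h => hc (hmem.mp h).2)]
  rw [hprob, Finset.sum_congr rfl (fun E _ => key E)]
  rw [Finset.sum_ite_mem, Finset.univ_inter]
  rw [powerset_sum S (S \ T) Finset.sdiff_subset p]
  have hcard : S.card - (S \ T).card = T.card := by
    rw [Finset.card_sdiff_of_subset hTS]; omega
  rw [hcard, hT, hS, card_filter_mem n k hk v]

/-- In `H(n,k,p_n)` with `λ_n = log n + w(n)`, `w(n) → ∞`, the probability that there is
no isolated vertex (equivalently, no degenerate star-collision) tends to `1`. -/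
theorem stmt14 (k : ℕ) (hk : 2 ≤ k) (w : ℕ → ℝ) (hw : Tendsto w atTop atTop)
    (p : ℕ → ℝ) (hp : ∀ᶠ n in atTop, 0 ≤ p n ∧ p n ≤ 1)
    (hlam : ∀ᶠ n in atTop, ((n - 1).choose (k - 1) : ℝ) * p n = Real.log n + w n) :
    Tendsto (fun n => hprob n k (p n) (fun E => ∀ v : Fin n, hstar E v ≠ ∅))
      atTop (nhds 1) := by
  classical
  have hk1 : 1 ≤ k := by omega
  have hlow : Tendsto (fun n => 1 - Real.exp (-(w n))) atTop (nhds 1) := by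
    have h1 : Tendsto (fun n => Real.exp (-(w n))) atTop (nhds 0) :=
      Real.tendsto_exp_atBot.comp (tendsto_neg_atTop_atBot.comp hw)
    have h2 : Tendsto (fun n => (1 : ℝ) - Real.exp (-(w n))) atTop (nhds (1 - 0)) :=
      tendsto_const_nhds.sub h1
    simpa using h2
  apply tendsto_of_tendsto_of_tendsto_of_le_of_le' hlow tendsto_const_nhds
  · -- lower bound eventually
    filter_upwards [hp, hlam, eventually_ge_atTop 1] with n hpn hlamn hn1
    obtain ⟨hp0, hp1⟩ := hpn
    set m := (n - 1).choose (k - 1) with hm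
    have hcompl : hprob n k (p n) (fun E => ∀ v : Fin n, hstar E v ≠ ∅)
        = 1 - hprob n k (p n) (fun E => ∃ v : Fin n, hstar E v = ∅) := by
      rw [← hprob_not]
      apply Finset.sum_congr rfl
      intro E _
      congr 1
      simp [not_exists]
    rw [hcompl]
    have hub : hprob n k (p n) (fun E => ∃ v : Fin n, hstar E v = ∅)
        ≤ Real.exp (-(w n)) := by
      calc hprob n k (p n) (fun E => ∃ v : Fin n, hstar E v = ∅)
          ≤ ∑ _v : Fin n, (1 - p n) ^ m := by
            have := hprob_union_bound n k (p n) hp0 hp1 (fun v E => hstar E v = ∅)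
            calc hprob n k (p n) (fun E => ∃ v : Fin n, hstar E v = ∅)
                ≤ ∑ v : Fin n, hprob n k (p n) (fun E => hstar E v = ∅) := this
              _ = ∑ _v : Fin n, (1 - p n) ^ m := by
                  apply Finset.sum_congr rfl
                  intro v _
                  exact hprob_isolated n k hk1 (p n) v
        _ = (n : ℝ) * (1 - p n) ^ m := by
            rw [Finset.sum_const, Finset.card_univ, Fintype.card_fin, nsmul_eq_mul]
        _ ≤ (n : ℝ) * Real.exp (-((m : ℝ) * p n)) := by
            apply mul_le_mul_of_nonneg_left _ (Nat.cast_nonneg n)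
            have h1 : (1 - p n) ≤ Real.exp (-(p n)) := by
              have := Real.add_one_le_exp (-(p n))
              linarith
            calc (1 - p n) ^ m ≤ Real.exp (-(p n)) ^ m :=
                  pow_le_pow_left₀ (by linarith) h1 m
              _ = Real.exp (-((m : ℝ) * p n)) := by
                  rw [← Real.exp_nat_mul]
                  ring_nf
        _ = Real.exp (-(w n)) := by
            rw [hlamn]
            have hn0 : (0 : ℝ) < (n : ℝ) := by exact_mod_cast hn1
            rw [neg_add, Real.exp_add, ← mul_assoc, Real.exp_neg,
              Real.exp_log hn0, mul_inv_cancel₀ (ne_of_gt hn0), one_mul]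
    linarith
  · -- upper bound eventually
    filter_upwards [hp] with n hpn
    exact hprob_le_one n k (p n) hpn.1 hpn.2 _
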